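/- Let Φ be of type F_4 realized in ℝ^4 as the set of vectors α with 2α ∈ ⊕ℤε_i and ⟨α,α⟩ ∈ {1,2}, i.e., Φ = {±ε_i} ∪ {±ε_i ± ε_j : i<j} ∪ {(±ε_1±ε_2±ε_3±ε_4)/2}. With ρ = (11ε_1 + 5ε_2 + 3ε_3 + ε_4)/2, the set Φ_0 = {α ∈ Φ : ⟨ρ, α^∨⟩ ≡ 0 mod 3} has {ε_1−ε_2, ε_2+ε_4, −ε_3, (ε_1+ε_2+ε_3−ε_4)/2} as a simple system and is a root system of type A_2 × A_2; in particular Φ_0 is not W-conjugate to Φ_J for any subset J of the simple roots of F_4. -/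

import Mathlib

namespace Stmt17

/-- The Euclidean inner product on `ℝ⁴` (with rational coordinates). -/
def ip (x y : Fin 4 → ℚ) : ℚ := ∑ i, x i * y i

/-- The root system of type `F₄` in `ℝ⁴`: vectors `α` with `2α` integral and
`⟨α, α⟩ ∈ {1, 2}`; explicitly `{±ε_i} ∪ {±ε_i ± ε_j : i < j} ∪ {(±ε₁±ε₂±ε₃±ε₄)/2}`. -/
def PhiF4 : Set (Fin 4 → ℚ) :=
  {v | (∀ i, ∃ k : ℤ, 2 * v i = (k : ℚ)) ∧ v ≠ 0 ∧ (ip v v = 1 ∨ ip v v = 2)}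

/-- The Weyl weight `ρ = (11ε₁ + 5ε₂ + 3ε₃ + ε₄)/2` for the simple system
`Π = {ε₂−ε₃, ε₃−ε₄, ε₄, (ε₁−ε₂−ε₃−ε₄)/2}`. -/
def ρF4 : Fin 4 → ℚ := ![11/2, 5/2, 3/2, 1/2]

/-- `Φ₀ = {α ∈ Φ : ⟨ρ, α^∨⟩ ≡ 0 mod 3}`. -/
def Phi0 : Set (Fin 4 → ℚ) :=
  {α ∈ PhiF4 | ∃ k : ℤ, 2 * ip ρF4 α / ip α α = ((3 * k : ℤ) : ℚ)}

/-- The simple system `Π` of `F₄` fixed above. -/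
def PiF4 : Set (Fin 4 → ℚ) :=
  {![0, 1, -1, 0], ![0, 0, 1, -1], ![0, 0, 0, 1], ![1/2, -1/2, -1/2, -1/2]}

def a1 : Fin 4 → ℚ := ![1, -1, 0, 0]       -- ε₁ − ε₂
def a2 : Fin 4 → ℚ := ![0, 1, 0, 1]        -- ε₂ + ε₄
def b1 : Fin 4 → ℚ := ![0, 0, -1, 0]       -- −ε₃
def b2 : Fin 4 → ℚ := ![1/2, 1/2, 1/2, -1/2]  -- (ε₁+ε₂+ε₃−ε₄)/2

/-- `Δ` is a simple system of `Ψ`. -/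
def IsSimpleSystem (Ψ Δ : Set (Fin 4 → ℚ)) : Prop :=
  Δ ⊆ Ψ ∧ LinearIndependent ℚ ((↑) : Δ → (Fin 4 → ℚ)) ∧
    ∀ α ∈ Ψ, ∃ c : (Fin 4 → ℚ) →₀ ℤ, (c.support : Set (Fin 4 → ℚ)) ⊆ Δ ∧
      α = c.sum (fun x n => n • x) ∧ ((∀ x, 0 ≤ c x) ∨ (∀ x, c x ≤ 0))

/-! ### Auxiliary integer bookkeeping -/

/-- sum of squares of the doubled coordinates -/
def Sq (p : ℤ × ℤ × ℤ × ℤ) : ℤ := p.1^2 + p.2.1^2 + p.2.2.1^2 + p.2.2.2^2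

/-- `4⟨ρ, α⟩` in terms of doubled coordinates -/
def sρ (p : ℤ × ℤ × ℤ × ℤ) : ℤ := 11*p.1 + 5*p.2.1 + 3*p.2.2.1 + p.2.2.2

noncomputable def T48 : Finset (ℤ × ℤ × ℤ × ℤ) :=
  ((Finset.Icc (-2:ℤ) 2) ×ˢ (Finset.Icc (-2:ℤ) 2) ×ˢ (Finset.Icc (-2:ℤ) 2) ×ˢ
    (Finset.Icc (-2:ℤ) 2)).filter (fun p => Sq p = 4 ∨ Sq p = 8)

noncomputable def T12 : Finset (ℤ × ℤ × ℤ × ℤ) := T48.filter (fun p => 3 * Sq p ∣ 2 * sρ p)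

def f48 (p : ℤ × ℤ × ℤ × ℤ) : Fin 4 → ℚ :=
  ![(p.1:ℚ)/2, (p.2.1:ℚ)/2, (p.2.2.1:ℚ)/2, (p.2.2.2:ℚ)/2]

lemma f48_inj : Function.Injective f48 := by
  rintro ⟨x1,x2,x3,x4⟩ ⟨y1,y2,y3,y4⟩ h
  have h0 := congrFun h 0
  have h1 := congrFun h 1
  have h2 := congrFun h 2
  have h3 := congrFun h 3
  simp [f48] at h0 h1 h2 h3
  have e0 : x1 = y1 := h0
  have e1 : x2 = y2 := h1
  have e2 : x3 = y3 := h2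
  have e3 : x4 = y4 := h3
  simp [e0, e1, e2, e3]

lemma ip_f48 (p : ℤ × ℤ × ℤ × ℤ) : ip (f48 p) (f48 p) = ((Sq p : ℤ) : ℚ) / 4 := by
  simp only [ip, f48, Sq, Fin.sum_univ_four]
  norm_num
  push_cast
  ring

lemma ipρ_f48 (p : ℤ × ℤ × ℤ × ℤ) : ip ρF4 (f48 p) = ((sρ p : ℤ) : ℚ) / 4 := by
  simp only [ip, f48, sρ, ρF4, Fin.sum_univ_four]
  norm_num
  push_cast
  ring

lemma Sq_48 {p : ℤ × ℤ × ℤ × ℤ} (hp : p ∈ T48) : Sq p = 4 ∨ Sq p = 8 :=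
  (Finset.mem_filter.1 hp).2

lemma PhiF4_eq : PhiF4 = ↑(T48.image f48) := by
  ext v
  simp only [Finset.coe_image, Set.mem_image, Finset.mem_coe]
  constructor
  · rintro ⟨hint, hne, hnorm⟩
    choose k hk using hint
    have hv : ∀ i, v i = (k i : ℚ) / 2 := fun i => by
      have := hk i; field_simp; linarith
    have hip : ip v v = ((k 0)^2 + (k 1)^2 + (k 2)^2 + (k 3)^2 : ℤ) / 4 := by
      simp only [ip, Fin.sum_univ_four, hv 0, hv 1, hv 2, hv 3]
      push_cast
      ring
    have hcast : (((k 0)^2 + (k 1)^2 + (k 2)^2 + (k 3)^2 : ℤ) : ℚ) = 4 * ip v v := by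
      rw [hip]; ring
    have hs : ((k 0)^2 + (k 1)^2 + (k 2)^2 + (k 3)^2 : ℤ) = 4 ∨
        ((k 0)^2 + (k 1)^2 + (k 2)^2 + (k 3)^2 : ℤ) = 8 := by
      rcases hnorm with h | h
      · left
        have h4 : (((k 0)^2 + (k 1)^2 + (k 2)^2 + (k 3)^2 : ℤ) : ℚ) = 4 := by
          rw [hcast, h]; norm_num
        exact_mod_cast h4
      · right
        have h8 : (((k 0)^2 + (k 1)^2 + (k 2)^2 + (k 3)^2 : ℤ) : ℚ) = 8 := by
          rw [hcast, h]; norm_num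
        exact_mod_cast h8
    have b0 : -2 ≤ k 0 ∧ k 0 ≤ 2 := by
      constructor <;> rcases hs with h | h <;>
        nlinarith [sq_nonneg (k 1), sq_nonneg (k 2), sq_nonneg (k 3)]
    have b1 : -2 ≤ k 1 ∧ k 1 ≤ 2 := by
      constructor <;> rcases hs with h | h <;>
        nlinarith [sq_nonneg (k 0), sq_nonneg (k 2), sq_nonneg (k 3)]
    have b2 : -2 ≤ k 2 ∧ k 2 ≤ 2 := by
      constructor <;> rcases hs with h | h <;>
        nlinarith [sq_nonneg (k 0), sq_nonneg (k 1), sq_nonneg (k 3)]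
    have b3 : -2 ≤ k 3 ∧ k 3 ≤ 2 := by
      constructor <;> rcases hs with h | h <;>
        nlinarith [sq_nonneg (k 0), sq_nonneg (k 1), sq_nonneg (k 2)]
    refine ⟨(k 0, k 1, k 2, k 3), ?_, ?_⟩
    · rw [T48, Finset.mem_filter]
      refine ⟨?_, by simpa [Sq] using hs⟩
      simp only [Finset.mem_product, Finset.mem_Icc]
      exact ⟨⟨b0.1, b0.2⟩, ⟨b1.1, b1.2⟩, ⟨b2.1, b2.2⟩, ⟨b3.1, b3.2⟩⟩
    · funext i
      fin_cases i <;> simp [f48, hv 0, hv 1, hv 2, hv 3]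
  · rintro ⟨p, hp, rfl⟩
    have hS := Sq_48 hp
    refine ⟨?_, ?_, ?_⟩
    · intro i
      fin_cases i
      · exact ⟨p.1, by norm_num [f48]; ring⟩
      · exact ⟨p.2.1, by norm_num [f48]; ring⟩
      · exact ⟨p.2.2.1, by norm_num [f48]; ring⟩
      · exact ⟨p.2.2.2, by norm_num [f48]; ring⟩
    · intro h
      have h0 := congrFun h 0
      have h1 := congrFun h 1
      have h2 := congrFun h 2
      have h3 := congrFun h 3
      simp [f48] at h0 h1 h2 h3
      rcases hS with h | h <;> simp [Sq, h0, h1, h2, h3] at h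
    · rw [ip_f48]
      rcases hS with h | h <;> rw [h] <;> norm_num

lemma Phi0_eq : Phi0 = ↑(T12.image f48) := by
  ext v
  simp only [Phi0, Set.mem_setOf_eq, Finset.coe_image, Set.mem_image, Finset.mem_coe, T12,
    Finset.mem_filter]
  constructor
  · rintro ⟨hv, k, hk⟩
    rw [PhiF4_eq] at hv
    simp only [Finset.coe_image, Set.mem_image, Finset.mem_coe] at hv
    obtain ⟨p, hp, rfl⟩ := hv
    refine ⟨p, ⟨hp, ?_⟩, rfl⟩
    have hSne : ((Sq p : ℤ) : ℚ) ≠ 0 := by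
      rcases Sq_48 hp with h | h <;> rw [h] <;> norm_num
    rw [ip_f48, ipρ_f48] at hk
    have hq : (2 * sρ p : ℚ) = 3 * (Sq p : ℚ) * (k : ℚ) := by
      field_simp at hk
      push_cast
      push_cast at hk
      linarith
    have hz : 2 * sρ p = 3 * Sq p * k := by exact_mod_cast hq
    exact ⟨k, hz⟩
  · rintro ⟨p, ⟨hp, hd⟩, rfl⟩
    have hSne : ((Sq p : ℤ) : ℚ) ≠ 0 := by
      rcases Sq_48 hp with h | h <;> rw [h] <;> norm_num
    obtain ⟨k, hk⟩ := hd
    refine ⟨?_, k, ?_⟩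
    · rw [PhiF4_eq]
      exact Finset.mem_coe.2 (Finset.mem_image_of_mem f48 hp)
    · rw [ip_f48, ipρ_f48]
      have hq : (2 * sρ p : ℚ) = 3 * (Sq p : ℚ) * (k : ℚ) := by exact_mod_cast hk
      push_cast
      field_simp
      linarith

def E12 : Finset (ℤ × ℤ × ℤ × ℤ) :=
  {(2,-2,0,0), (-2,2,0,0), (0,2,0,2), (0,-2,0,-2), (2,0,0,2), (-2,0,0,-2),
    (0,0,-2,0), (0,0,2,0), (1,1,1,-1), (-1,-1,-1,1), (1,1,-1,-1), (-1,-1,1,1)}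

lemma T12_eq : T12 = E12 := Finset.Subset.antisymm (by decide) (by decide)

lemma Phi0_explicit : Phi0 = {a1, -a1, a2, -a2, a1 + a2, -(a1 + a2),
    b1, -b1, b2, -b2, b1 + b2, -(b1 + b2)} := by
  have e1 : f48 (2,-2,0,0) = a1 := by funext i; fin_cases i <;> norm_num [f48, a1]
  have e2 : f48 (-2,2,0,0) = -a1 := by funext i; fin_cases i <;> norm_num [f48, a1]
  have e3 : f48 (0,2,0,2) = a2 := by funext i; fin_cases i <;> norm_num [f48, a2]
  have e4 : f48 (0,-2,0,-2) = -a2 := by funext i; fin_cases i <;> norm_num [f48, a2]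
  have e5 : f48 (2,0,0,2) = a1 + a2 := by funext i; fin_cases i <;> norm_num [f48, a1, a2]
  have e6 : f48 (-2,0,0,-2) = -(a1 + a2) := by funext i; fin_cases i <;> norm_num [f48, a1, a2]
  have e7 : f48 (0,0,-2,0) = b1 := by funext i; fin_cases i <;> norm_num [f48, b1]
  have e8 : f48 (0,0,2,0) = -b1 := by funext i; fin_cases i <;> norm_num [f48, b1]
  have e9 : f48 (1,1,1,-1) = b2 := by funext i; fin_cases i <;> norm_num [f48, b2]
  have e10 : f48 (-1,-1,-1,1) = -b2 := by funext i; fin_cases i <;> norm_num [f48, b2]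
  have e11 : f48 (1,1,-1,-1) = b1 + b2 := by funext i; fin_cases i <;> norm_num [f48, b1, b2]
  have e12 : f48 (-1,-1,1,1) = -(b1 + b2) := by funext i; fin_cases i <;> norm_num [f48, b1, b2]
  rw [Phi0_eq, T12_eq, E12]
  simp only [Finset.image_insert, Finset.image_singleton, e1, e2, e3, e4, e5, e6, e7, e8,
    e9, e10, e11, e12, Finset.coe_insert, Finset.coe_singleton]

lemma cf_exists (m1 m2 m3 m4 : ℤ) (α : Fin 4 → ℚ)
    (hα : α = m1 • a1 + m2 • a2 + m3 • b1 + m4 • b2)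
    (hs : (0 ≤ m1 ∧ 0 ≤ m2 ∧ 0 ≤ m3 ∧ 0 ≤ m4) ∨ (m1 ≤ 0 ∧ m2 ≤ 0 ∧ m3 ≤ 0 ∧ m4 ≤ 0)) :
    ∃ c : (Fin 4 → ℚ) →₀ ℤ, (c.support : Set (Fin 4 → ℚ)) ⊆ {a1, a2, b1, b2} ∧
      α = c.sum (fun x n => n • x) ∧ ((∀ x, 0 ≤ c x) ∨ (∀ x, c x ≤ 0)) := by
  refine ⟨Finsupp.single a1 m1 + Finsupp.single a2 m2 + Finsupp.single b1 m3 +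
    Finsupp.single b2 m4, ?_, ?_, ?_⟩
  · intro x hx
    simp only [Finset.mem_coe, Finsupp.mem_support_iff, Finsupp.add_apply,
      Finsupp.single_apply] at hx
    by_contra hxn
    simp only [Set.mem_insert_iff, Set.mem_singleton_iff, not_or] at hxn
    obtain ⟨h1, h2, h3, h4⟩ := hxn
    rw [if_neg (fun h => h1 h.symm), if_neg (fun h => h2 h.symm),
      if_neg (fun h => h3 h.symm), if_neg (fun h => h4 h.symm)] at hx
    simp at hx
  · rw [Finsupp.sum_add_index' (fun a => zero_smul ℤ a) (fun a u v => add_smul u v a),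
      Finsupp.sum_add_index' (fun a => zero_smul ℤ a) (fun a u v => add_smul u v a),
      Finsupp.sum_add_index' (fun a => zero_smul ℤ a) (fun a u v => add_smul u v a),
      Finsupp.sum_single_index (zero_smul ℤ a1), Finsupp.sum_single_index (zero_smul ℤ a2),
      Finsupp.sum_single_index (zero_smul ℤ b1), Finsupp.sum_single_index (zero_smul ℤ b2)]
    exact hα
  · rcases hs with ⟨h1, h2, h3, h4⟩ | ⟨h1, h2, h3, h4⟩
    · left
      intro x
      simp only [Finsupp.add_apply, Finsupp.single_apply]
      split_ifs <;> omega
    · right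
      intro x
      simp only [Finsupp.add_apply, Finsupp.single_apply]
      split_ifs <;> omega

lemma li4 : LinearIndependent ℚ ![a1, a2, b1, b2] := by
  rw [Fintype.linearIndependent_iff]
  intro g hg
  have h0 := congrFun hg 0
  have h1 := congrFun hg 1
  have h2 := congrFun hg 2
  have h3 := congrFun hg 3
  simp [Fin.sum_univ_four, a1, a2, b1, b2] at h0 h1 h2 h3
  intro i
  fin_cases i <;> simp <;> linarith

lemma range4 : Set.range ![a1, a2, b1, b2] = ({a1, a2, b1, b2} : Set (Fin 4 → ℚ)) := by
  ext x
  simp [Matrix.range_cons, Matrix.range_empty, Set.mem_insert_iff]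
  tauto

lemma span4 : Submodule.span ℚ ({a1, a2, b1, b2} : Set (Fin 4 → ℚ)) = ⊤ := by
  rw [← range4]
  apply Submodule.eq_top_of_finrank_eq
  rw [finrank_span_eq_card li4]
  simp

lemma mem_Phi0 : a1 ∈ Phi0 ∧ a2 ∈ Phi0 ∧ b1 ∈ Phi0 ∧ b2 ∈ Phi0 := by
  rw [Phi0_explicit]
  refine ⟨by simp, by simp, by simp, by simp⟩

theorem stmt_17 :
    IsSimpleSystem Phi0 {a1, a2, b1, b2} ∧
    Phi0 = {a1, -a1, a2, -a2, a1 + a2, -(a1 + a2),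
            b1, -b1, b2, -b2, b1 + b2, -(b1 + b2)} ∧
    (∀ x ∈ ({a1, a2, a1 + a2} : Set (Fin 4 → ℚ)),
      ∀ y ∈ ({b1, b2, b1 + b2} : Set (Fin 4 → ℚ)), ip x y = 0) ∧
    (∀ w : (Fin 4 → ℚ) ≃ₗ[ℚ] (Fin 4 → ℚ),
      (∀ x y, ip (w x) (w y) = ip x y) → w '' PhiF4 = PhiF4 →
      ∀ J ⊆ PiF4, w '' Phi0 ≠ PhiF4 ∩ (Submodule.span ℚ J : Submodule ℚ (Fin 4 → ℚ))) := by
  obtain ⟨ha1, ha2, hb1, hb2⟩ := mem_Phi0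
  refine ⟨⟨?_, ?_, ?_⟩, Phi0_explicit, ?_, ?_⟩
  · -- Δ ⊆ Phi0
    intro x hx
    simp only [Set.mem_insert_iff, Set.mem_singleton_iff] at hx
    rcases hx with rfl | rfl | rfl | rfl <;> assumption
  · -- linear independence of the coercion
    have h := (linearIndepOn_id_range_iff li4.injective).2 li4
    rw [range4] at h
    exact h
  · -- every element of Phi0 has uniform-sign coordinates in Δ
    intro α hα
    rw [Phi0_explicit] at hα
    simp only [Set.mem_insert_iff, Set.mem_singleton_iff] at hα
    rcases hα with rfl | rfl | rfl | rfl | rfl | rfl | rfl | rfl | rfl | rfl | rfl | rfl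
    · exact cf_exists 1 0 0 0 _ (by module) (by norm_num)
    · exact cf_exists (-1) 0 0 0 _ (by module) (by norm_num)
    · exact cf_exists 0 1 0 0 _ (by module) (by norm_num)
    · exact cf_exists 0 (-1) 0 0 _ (by module) (by norm_num)
    · exact cf_exists 1 1 0 0 _ (by module) (by norm_num)
    · exact cf_exists (-1) (-1) 0 0 _ (by module) (by norm_num)
    · exact cf_exists 0 0 1 0 _ (by module) (by norm_num)
    · exact cf_exists 0 0 (-1) 0 _ (by module) (by norm_num)
    · exact cf_exists 0 0 0 1 _ (by module) (by norm_num)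
    · exact cf_exists 0 0 0 (-1) _ (by module) (by norm_num)
    · exact cf_exists 0 0 1 1 _ (by module) (by norm_num)
    · exact cf_exists 0 0 (-1) (-1) _ (by module) (by norm_num)
  · -- orthogonality of the two A₂-factors
    intro x hx y hy
    simp only [Set.mem_insert_iff, Set.mem_singleton_iff] at hx hy
    rcases hx with rfl | rfl | rfl <;> rcases hy with rfl | rfl | rfl <;>
      simp [ip, Fin.sum_univ_four, a1, a2, b1, b2] <;> norm_num
  · -- non-conjugacy
    intro w hw hPhi J hJ hcon
    -- every image of an element of Phi0 lies in span J
    have himg : ∀ v ∈ Phi0, w v ∈ Submodule.span ℚ J := by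
      intro v hv
      have hm : w v ∈ w '' Phi0 := ⟨v, hv, rfl⟩
      rw [hcon] at hm
      exact hm.2
    -- span J = ⊤
    have hkey : Submodule.span ℚ J = ⊤ := by
      rw [eq_top_iff]
      have h1 : Submodule.map (w : (Fin 4 → ℚ) →ₗ[ℚ] (Fin 4 → ℚ))
          (Submodule.span ℚ ({a1, a2, b1, b2} : Set (Fin 4 → ℚ))) ≤ Submodule.span ℚ J := by
        rw [Submodule.map_span]
        apply Submodule.span_le.2
        rintro x ⟨y, hy, rfl⟩
        simp only [Set.mem_insert_iff, Set.mem_singleton_iff] at hy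
        rcases hy with rfl | rfl | rfl | rfl <;> exact himg _ (by assumption)
      rw [span4, Submodule.map_top, LinearEquiv.range] at h1
      exact h1
    rw [hkey] at hcon
    simp only [Submodule.top_coe, Set.inter_univ] at hcon
    -- cardinality contradiction : 12 ≠ 48
    have c12 : (w '' Phi0).ncard = 12 := by
      rw [Set.ncard_image_of_injective _ w.injective, Phi0_eq, Set.ncard_coe_finset,
        Finset.card_image_of_injective _ f48_inj]
      decide
    have c48 : PhiF4.ncard = 48 := by
      rw [PhiF4_eq, Set.ncard_coe_finset, Finset.card_image_of_injective _ f48_inj]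
      decide
    rw [hcon, c48] at c12
    exact absurd c12 (by norm_num)

end Stmt17
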